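/- Let Ω ⊆ ℂ be a nonempty open set. An ideal I of the ring 𝒜(Ω) is a proper principal maximal ideal if and only if there exists α ∈ Ω such that I = M_α = {f ∈ 𝒜(Ω) : f(α) = 0}. -/

import Mathlib

set_option synthInstance.maxHeartbeats 1000000
set_option maxHeartbeats 1000000

open Complex
open scoped Classical

noncomputable section

/-- The algebra `A(Omega)` of complex analytic functions on `Omega`, realized as those
functions `Omega -> C` that agree on `Omega` with some function differentiable on `Omega`. -/
def analyticAlg (Ω : Set ℂ) : Subalgebra ℂ (Ω → ℂ) where
  carrier := {f | ∃ F : ℂ → ℂ, DifferentiableOn ℂ F Ω ∧ ∀ z : Ω, F z = f z}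
  add_mem' := by
    rintro f g ⟨F, hF, hFf⟩ ⟨G, hG, hGg⟩
    exact ⟨F + G, hF.add hG, fun z => by simp [hFf z, hGg z]⟩
  mul_mem' := by
    rintro f g ⟨F, hF, hFf⟩ ⟨G, hG, hGg⟩
    exact ⟨F * G, hF.mul hG, fun z => by simp [hFf z, hGg z]⟩
  algebraMap_mem' := fun r => ⟨fun _ => r, differentiableOn_const r, fun _ => rfl⟩

/-- Evaluation at a point, as a ring hom. -/
def evalHom (Ω : Set ℂ) (α : Ω) : ↥(analyticAlg Ω) →+* ℂ :=
  (Pi.evalRingHom (fun _ : Ω => ℂ) α).comp (analyticAlg Ω).val.toRingHom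

lemma evalHom_apply (Ω : Set ℂ) (α : Ω) (f : ↥(analyticAlg Ω)) :
    evalHom Ω α f = f.1 α := rfl

lemma evalHom_surjective (Ω : Set ℂ) (α : Ω) : Function.Surjective (evalHom Ω α) :=
  fun c => ⟨algebraMap ℂ _ c, rfl⟩

lemma ker_maximal (Ω : Set ℂ) (α : Ω) : (RingHom.ker (evalHom Ω α)).IsMaximal :=
  RingHom.ker_isMaximal_of_surjective _ (evalHom_surjective Ω α)

lemma ker_principal (Ω : Set ℂ) (hΩ : IsOpen Ω) (α : Ω) :
    Submodule.IsPrincipal (RingHom.ker (evalHom Ω α)) := by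
  set e : ↥(analyticAlg Ω) :=
    ⟨fun z => (z : ℂ) - α, fun z => z - α, (differentiable_id.sub_const _).differentiableOn,
      fun z => rfl⟩ with he
  refine ⟨e, ?_⟩
  apply le_antisymm
  · intro f hf
    rw [RingHom.mem_ker, evalHom_apply] at hf
    obtain ⟨F, hF, hFf⟩ := f.2
    have hα : F α = 0 := (hFf α).trans hf
    have hG : DifferentiableOn ℂ (dslope F α) Ω :=
      (Complex.differentiableOn_dslope (hΩ.mem_nhds α.2)).mpr hF
    have hg : (fun z : Ω => dslope F α z) ∈ analyticAlg Ω := ⟨dslope F α, hG, fun z => rfl⟩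
    rw [Ideal.submodule_span_eq, Ideal.mem_span_singleton]
    refine ⟨⟨_, hg⟩, ?_⟩
    ext z
    have := sub_smul_dslope F (α : ℂ) (z : ℂ)
    rw [smul_eq_mul, hα, sub_zero, hFf z] at this
    exact this.symm
  · rw [Ideal.submodule_span_eq, Ideal.span_le]
    rintro x rfl
    simp [RingHom.mem_ker, evalHom_apply, he]

/-- the proper principal maximal ideals of `A(Omega)` are exactly the ideals
`M_alpha` for `alpha in Omega`. -/
theorem stmt16 (Ω : Set ℂ) (hΩ : IsOpen Ω) (hne : Ω.Nonempty)
    (I : Ideal ↥(analyticAlg Ω)) :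
    (I ≠ ⊤ ∧ Submodule.IsPrincipal I ∧ I.IsMaximal) ↔
      ∃ α : Ω, ∀ f : ↥(analyticAlg Ω), f ∈ I ↔ f.1 α = 0 := by
  constructor
  · rintro ⟨hne', ⟨g, rfl⟩, hmax⟩
    -- g must vanish somewhere
    by_cases hz : ∃ α : Ω, g.1 α = 0
    · obtain ⟨α, hα⟩ := hz
      have hle : Ideal.span {g} ≤ RingHom.ker (evalHom Ω α) := by
        rw [Ideal.span_le]
        rintro x rfl
        simpa [RingHom.mem_ker, evalHom_apply] using hα
      have : Ideal.span {g} = RingHom.ker (evalHom Ω α) := by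
        refine hmax.eq_of_le (ker_maximal Ω α).ne_top ?_
        simpa [Ideal.submodule_span_eq] using hle
      refine ⟨α, fun f => ?_⟩
      rw [Ideal.submodule_span_eq, this]
      exact Iff.rfl
    · -- g never vanishes, so it's a unit, contradiction
      exfalso
      push_neg at hz
      obtain ⟨G, hG, hGg⟩ := g.2
      have hGne : ∀ z ∈ Ω, G z ≠ 0 := fun z hzΩ => by
        rw [show G z = g.1 ⟨z, hzΩ⟩ from hGg ⟨z, hzΩ⟩]; exact hz ⟨z, hzΩ⟩
      have hinv : (fun z : Ω => (g.1 z)⁻¹) ∈ analyticAlg Ω :=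
        ⟨fun z => (G z)⁻¹, hG.inv hGne, fun z => by simp [hGg z]⟩
      have hunit : g * ⟨_, hinv⟩ = 1 := by
        ext z
        exact mul_inv_cancel₀ (hz z)
      apply hne'
      rw [Ideal.submodule_span_eq, Ideal.span_singleton_eq_top]
      exact IsUnit.of_mul_eq_one _ hunit
  · rintro ⟨α, hα⟩
    have hI : I = RingHom.ker (evalHom Ω α) := by
      ext f
      rw [RingHom.mem_ker, evalHom_apply]
      exact hα f
    subst hI
    exact ⟨(ker_maximal Ω α).ne_top, ker_principal Ω hΩ α, ker_maximal Ω α⟩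

end
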